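/- arXiv:2507.09032 — 2 statements merged into one kernel-verified Lean document; each statement's English description precedes it below -/
import Mathlib

section
/- (Joint probability recursion, Lemma C.2.) Fix Y ∈ ℤ, integers D ≥ 2, 1 ≤ r ≤ D, 1 ≤ d ≤ D, and (z_1,…,z_d) ∈ ℤ^d. Let Z_1, Z_2, … be i.i.d. with pmf f, and for D' ≤ D let os_{r'}(Z_{1:D'}) denote the r'-th smallest of the first D' coordinates. If z_d < Y, then: for r ≥ 2, P(Z_1 = z_1, …, Z_d = z_d ∧ os_r(Z_{1:D}) = Y) = f(z_d) · P(Z_1 = z_1, …, Z_{d−1} = z_{d−1} ∧ os_{r−1}(Z_{1:D−1}) = Y), while for r = 1 this probability is 0. If z_d > Y, then: for r ≤ D − 1, P(Z_1 = z_1, …, Z_d = z_d ∧ os_r(Z_{1:D}) = Y) = f(z_d) · P(Z_1 = z_1, …, Z_{d−1} = z_{d−1} ∧ os_r(Z_{1:D−1}) = Y), while for r = D this probability is 0. -/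
open MeasureTheory

/-- The measure on ℤ with mass function `f`. -/
noncomputable def parentMeasure (f : ℤ → ℝ) : Measure ℤ :=
  Measure.count.withDensity fun z => ENNReal.ofReal (f z)

/-- `P f D S` is the probability of the event `S` under the `D`-fold product of the
measure on ℤ with pmf `f`, i.e. the law of `D` i.i.d. draws `Z = (Z_1, …, Z_D)` from `f`. -/
noncomputable def P (f : ℤ → ℝ) (D : ℕ) (S : Set (Fin D → ℤ)) : ℝ :=
  (Measure.pi (fun _ : Fin D => parentMeasure f) S).toReal

/-- The CDF of `f`: `F(y) = ∑_{t ≤ y} f(t)`. -/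
noncomputable def Fcdf (f : ℤ → ℝ) (y : ℤ) : ℝ := ∑' z : {t : ℤ // t ≤ y}, f z.1

/-- The number of entries of `z` that are `≤ y`. -/
def countLe {n : ℕ} (z : Fin n → ℤ) (y : ℤ) : ℕ :=
  (Finset.univ.filter fun i => z i ≤ y).card

/-- `osEq r z Y` says that the `r`-th smallest entry of `z` (counting multiplicity)
equals `Y`: the `r`-th order statistic is `≤ Y` but not `≤ Y - 1`. -/
def osEq {n : ℕ} (r : ℕ) (z : Fin n → ℤ) (Y : ℤ) : Prop :=
  r ≤ countLe z Y ∧ countLe z (Y - 1) < r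

/-- The order-statistic CDF `F^{(a,m)}(y) = ∑_{t=a}^{m} (m choose t) F(y)^t (1−F(y))^{m−t}`. -/
noncomputable def osCDF (f : ℤ → ℝ) (a m : ℕ) (y : ℤ) : ℝ :=
  ∑ t ∈ Finset.Icc a m, (m.choose t : ℝ) * Fcdf f y ^ t * (1 - Fcdf f y) ^ (m - t)

instance parent_sigmaFinite (f : ℤ → ℝ) : SigmaFinite (parentMeasure f) := by
  apply Measure.sigmaFinite_of_countable (S := Set.range fun a : ℤ => ({a} : Set ℤ))
  · exact Set.countable_range _
  · rintro s ⟨a, rfl⟩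
    rw [parentMeasure, withDensity_apply _ (measurableSet_singleton a),
      lintegral_singleton, Measure.count_singleton, mul_one]
    exact ENNReal.ofReal_lt_top
  · ext x; simp
lemma parent_singleton (f : ℤ → ℝ) (a : ℤ) :
    parentMeasure f {a} = ENNReal.ofReal (f a) := by
  rw [parentMeasure, withDensity_apply _ (measurableSet_singleton a),
    lintegral_singleton, Measure.count_singleton, mul_one]

lemma pi_singleton (f : ℤ → ℝ) (n : ℕ) (ω : Fin n → ℤ) :
    Measure.pi (fun _ : Fin n => parentMeasure f) {ω}
      = ∏ j, ENNReal.ofReal (f (ω j)) := by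
  rw [← Set.univ_pi_singleton, Measure.pi_pi]
  simp [parent_singleton]

lemma pi_apply_tsum (f : ℤ → ℝ) (n : ℕ) (S : Set (Fin n → ℤ)) :
    Measure.pi (fun _ : Fin n => parentMeasure f) S
      = ∑' ω : S, ∏ j, ENNReal.ofReal (f (ω.1 j)) := by
  have h := tsum_measure_preimage_singleton
    (μ := Measure.pi (fun _ : Fin n => parentMeasure f)) (s := S)
    (S.to_countable) (f := id) (fun y _ => by simp)
  simp only [Set.preimage_id] at h
  rw [← h]
  exact tsum_congr fun ω => pi_singleton f n ω.1

lemma prod_insert (g : ℤ → ENNReal) {m : ℕ} (i : Fin (m+1)) (x₀ : ℤ) (w : Fin m → ℤ) :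
    (∏ j, g (Fin.insertNth (α := fun _ => ℤ) i x₀ w j)) = g x₀ * ∏ j, g (w j) := by
  rw [Fin.prod_univ_succAbove (fun j => g (Fin.insertNth (α := fun _ => ℤ) i x₀ w j)) i]
  simp

lemma P_insert (f : ℤ → ℝ) (hf0 : ∀ z, 0 ≤ f z) (m : ℕ) (i : Fin (m+1)) (x₀ : ℤ)
    (T : Set (Fin m → ℤ)) :
    P f (m+1) {ω | ω i = x₀ ∧ i.removeNth ω ∈ T} = f x₀ * P f m T := by
  let e : T ≃ {ω : Fin (m+1) → ℤ | ω i = x₀ ∧ i.removeNth ω ∈ T} :=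
    { toFun := fun ω' => ⟨i.insertNth x₀ ω'.1, by
        constructor
        · simp
        · simp only [Fin.removeNth_insertNth]; exact ω'.2⟩
      invFun := fun ω => ⟨i.removeNth ω.1, ω.2.2⟩
      left_inv := fun ω' => by
        ext1; simp
      right_inv := fun ⟨ω, h1, h2⟩ => Subtype.ext (by
        dsimp only
        rw [← h1, Fin.insertNth_self_removeNth]) }
  have key : Measure.pi (fun _ : Fin (m+1) => parentMeasure f)
      {ω | ω i = x₀ ∧ i.removeNth ω ∈ T}
      = ENNReal.ofReal (f x₀) * Measure.pi (fun _ : Fin m => parentMeasure f) T := by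
    rw [pi_apply_tsum, pi_apply_tsum, ← ENNReal.tsum_mul_left,
      ← Equiv.tsum_eq e (fun ω => ∏ j, ENNReal.ofReal (f (ω.1 j)))]
    exact tsum_congr fun ω' =>
      prod_insert (fun t => ENNReal.ofReal (f t)) i x₀ ω'.1
  rw [P, P, key, ENNReal.toReal_mul, ENNReal.toReal_ofReal (hf0 x₀)]

lemma countLe_eq (m : ℕ) (i : Fin (m+1)) (ω : Fin (m+1) → ℤ) (y : ℤ) :
    countLe ω y = (if ω i ≤ y then 1 else 0) + countLe (i.removeNth ω) y := by
  classical
  unfold countLe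
  rw [Finset.card_filter, Finset.card_filter,
    Fin.sum_univ_succAbove (fun j => if ω j ≤ y then 1 else 0) i]
  rfl

lemma countLe_le {n : ℕ} (ω : Fin n → ℤ) (y : ℤ) : countLe ω y ≤ n := by
  classical
  calc countLe ω y ≤ Finset.univ.card := Finset.card_filter_le _ _
  _ = n := Finset.card_fin n


/-- **Lemma C.2** (joint probability recursion): for i.i.d. draws with pmf `f`, a prefix
`z ∈ ℤ^d` whose last entry satisfies `z_d < Y` (resp. `z_d > Y`), the joint probability of
observing the prefix together with `{os_r(Z_{1:D}) = Y}` factors out `f(z_d)` and reduces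
to the analogous probability with rank `r−1` (resp. `r`) and order `D−1`, and vanishes
when `r = 1` (resp. `r = D`). -/
theorem joint_probability_recursion
    (f : ℤ → ℝ) (hf0 : ∀ z, 0 ≤ f z) (hf1 : HasSum f 1)
    (Y : ℤ) (D r d : ℕ) (hD : 2 ≤ D) (hr1 : 1 ≤ r) (hrD : r ≤ D)
    (hd1 : 1 ≤ d) (hdD : d ≤ D) (z : Fin d → ℤ) :
    (z ⟨d - 1, by omega⟩ < Y →
      ((2 ≤ r →
        P f D {ω | (∀ t : Fin d, ω (Fin.castLE hdD t) = z t) ∧ osEq r ω Y}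
          = f (z ⟨d - 1, by omega⟩) *
            P f (D - 1) {ω | (∀ t : Fin (d - 1),
                ω (Fin.castLE (by omega) t) = z (Fin.castLE (by omega) t)) ∧
              osEq (r - 1) ω Y}) ∧
       (r = 1 →
        P f D {ω | (∀ t : Fin d, ω (Fin.castLE hdD t) = z t) ∧ osEq r ω Y} = 0))) ∧
    (Y < z ⟨d - 1, by omega⟩ →
      ((r ≤ D - 1 →
        P f D {ω | (∀ t : Fin d, ω (Fin.castLE hdD t) = z t) ∧ osEq r ω Y}
          = f (z ⟨d - 1, by omega⟩) *
            P f (D - 1) {ω | (∀ t : Fin (d - 1),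
                ω (Fin.castLE (by omega) t) = z (Fin.castLE (by omega) t)) ∧
              osEq r ω Y}) ∧
       (r = D →
        P f D {ω | (∀ t : Fin d, ω (Fin.castLE hdD t) = z t) ∧ osEq r ω Y} = 0))) := by
  obtain ⟨m, rfl⟩ : ∃ m, D = m + 1 := ⟨D - 1, by omega⟩
  obtain ⟨e, rfl⟩ : ∃ e, d = e + 1 := ⟨d - 1, by omega⟩
  have hem : e < m + 1 := by omega
  set i : Fin (m + 1) := ⟨e, hem⟩ with hidef
  set x₀ : ℤ := z ⟨e, Nat.lt_succ_self e⟩ with hx0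
  -- succAbove computation
  have hsa : ∀ (t : ℕ) (ht : t < e),
      i.succAbove ⟨t, by omega⟩ = ⟨t, by omega⟩ := by
    intro t ht
    rw [Fin.succAbove_of_castSucc_lt]
    · rfl
    · exact ht
  -- prefix characterization
  have hpre : ∀ ω : Fin (m + 1) → ℤ,
      (∀ t : Fin (e + 1), ω (Fin.castLE hdD t) = z t) ↔
      (ω i = x₀ ∧ ∀ t : Fin (e + 1 - 1),
        (i.removeNth ω) (Fin.castLE (by omega) t) = z (Fin.castLE (by omega) t)) := by
    intro ω
    constructor
    · intro H
      refine ⟨H ⟨e, Nat.lt_succ_self e⟩, fun t => ?_⟩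
      show ω (i.succAbove (Fin.castLE (by omega) t)) = _
      have h1 : Fin.castLE (by omega : e + 1 - 1 ≤ m) t = ⟨t.1, by omega⟩ := rfl
      rw [h1, hsa t.1 t.2]
      exact H ⟨t.1, by omega⟩
    · rintro ⟨H1, H2⟩ t
      by_cases ht : t.1 = e
      · have h2 : t = ⟨e, Nat.lt_succ_self e⟩ := Fin.ext ht
        rw [h2]; exact H1
      · have htl : t.1 < e := by omega
        have h3 := H2 ⟨t.1, (show t.1 < e + 1 - 1 by omega)⟩
        have h4 : (i.removeNth ω) (Fin.castLE (show e + 1 - 1 ≤ m by omega)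
              ⟨t.1, (show t.1 < e + 1 - 1 by omega)⟩)
            = ω (Fin.castLE hdD t) := by
          show ω (i.succAbove ⟨t.1, (show t.1 < m by omega)⟩) = _
          rw [hsa t.1 htl]
          rfl
        have h5 : z (Fin.castLE (show e + 1 - 1 ≤ e + 1 by omega)
              ⟨t.1, (show t.1 < e + 1 - 1 by omega)⟩) = z t := rfl
        rw [← h5, ← h3]
        exact h4.symm
  have hc := fun (ω : Fin (m + 1) → ℤ) (y : ℤ) => countLe_eq m i ω y
  -- main reduction
  have main : ∀ (r' : ℕ), (∀ ω : Fin (m + 1) → ℤ, ω i = x₀ →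
        (osEq r ω Y ↔ osEq r' (i.removeNth ω) Y)) →
      P f (m + 1) {ω | (∀ t : Fin (e + 1), ω (Fin.castLE hdD t) = z t) ∧ osEq r ω Y}
        = f x₀ * P f (m + 1 - 1) {ω | (∀ t : Fin (e + 1 - 1),
              ω (Fin.castLE (by omega) t) = z (Fin.castLE (by omega) t)) ∧
            osEq r' ω Y} := by
    intro r' hos
    have hset : {ω : Fin (m + 1) → ℤ |
          (∀ t : Fin (e + 1), ω (Fin.castLE hdD t) = z t) ∧ osEq r ω Y}
        = {ω : Fin (m + 1) → ℤ | ω i = x₀ ∧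
            i.removeNth ω ∈ {ω' : Fin m → ℤ | (∀ t : Fin (e + 1 - 1),
              ω' (Fin.castLE (by omega) t) = z (Fin.castLE (by omega) t)) ∧
            osEq r' ω' Y}} := by
      ext ω
      simp only [Set.mem_setOf_eq]
      rw [hpre ω]
      constructor
      · rintro ⟨⟨h1, h2⟩, h3⟩; exact ⟨h1, h2, (hos ω h1).1 h3⟩
      · rintro ⟨h1, h2, h3⟩; exact ⟨⟨h1, h2⟩, (hos ω h1).2 h3⟩
    rw [hset]
    exact P_insert f hf0 m i x₀ _
  -- emptiness reduction
  have empt : ∀ (hno : ∀ ω : Fin (m + 1) → ℤ, ω i = x₀ → ¬ osEq r ω Y),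
      P f (m + 1) {ω | (∀ t : Fin (e + 1), ω (Fin.castLE hdD t) = z t) ∧ osEq r ω Y}
        = 0 := by
    intro hno
    have hset : {ω : Fin (m + 1) → ℤ |
          (∀ t : Fin (e + 1), ω (Fin.castLE hdD t) = z t) ∧ osEq r ω Y} = ∅ := by
      ext ω
      simp only [Set.mem_setOf_eq, Set.mem_empty_iff_false, iff_false, not_and]
      intro hp
      exact hno ω (((hpre ω).1 hp).1)
    rw [hset]
    simp [P]
  constructor
  · intro hlt
    have hlt' : x₀ < Y := hlt
    constructor
    · intro hr2
      refine main (r - 1) fun ω hωi => ?_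
      have c1 := hc ω Y
      have c2 := hc ω (Y - 1)
      rw [hωi, if_pos hlt'.le] at c1
      rw [hωi, if_pos (by omega : x₀ ≤ Y - 1)] at c2
      unfold osEq
      omega
    · intro hre
      refine empt fun ω hωi => ?_
      have c2 := hc ω (Y - 1)
      rw [hωi, if_pos (by omega : x₀ ≤ Y - 1)] at c2
      unfold osEq
      omega
  · intro hgt
    have hgt' : Y < x₀ := hgt
    constructor
    · intro hrm
      refine main r fun ω hωi => ?_
      have c1 := hc ω Y
      have c2 := hc ω (Y - 1)
      rw [hωi, if_neg (by omega : ¬ x₀ ≤ Y)] at c1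
      rw [hωi, if_neg (by omega : ¬ x₀ ≤ Y - 1)] at c2
      unfold osEq
      omega
    · intro hre
      refine empt fun ω hωi => ?_
      have c1 := hc ω Y
      rw [hωi, if_neg (by omega : ¬ x₀ ≤ Y)] at c1
      have hle := countLe_le (i.removeNth ω) Y
      unfold osEq
      omega
end

section
/- (Conditional probability given one tie, Lemma C.6.) Fix Y ∈ ℤ with f(Y) > 0 and an integer D ≥ 2, and write F^{(a,m)}(y) = ∑_{t=a}^{m} (m choose t) F(y)^t (1−F(y))^{m−t}. Then: (i) for 1 < r < D, P(os_r(Z) = Y ∧ Z_1 = Y) = f(Y) · (F^{(r−1, D−1)}(Y) − F^{(r, D−1)}(Y−1)); (ii) for r = D, P(os_D(Z) = Y ∧ Z_1 = Y) = f(Y) · F^{(D−1, D−1)}(Y); (iii) for r = 1, P(os_1(Z) = Y ∧ Z_1 = Y) = f(Y) · (1 − F^{(1, D−1)}(Y−1)). Equivalently, dividing by P(Z_1 = Y) = f(Y) > 0 gives the corresponding conditional probabilities P(os_r(Z) = Y | Z_1 = Y). -/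
open MeasureTheory

/- ## Auxiliary lemmas -/

lemma parentMeasure_apply (f : ℤ → ℝ) (S : Set ℤ) :
    parentMeasure f S = ∑' z : S, ENNReal.ofReal (f z) := by
  rw [parentMeasure, withDensity_apply _ (Set.to_countable S).measurableSet,
    ← lintegral_indicator (Set.to_countable S).measurableSet, lintegral_count, ← tsum_subtype]

lemma parentMeasure_prob (f : ℤ → ℝ) (hf0 : ∀ z, 0 ≤ f z) (hf1 : HasSum f 1) :
    IsProbabilityMeasure (parentMeasure f) := by
  constructor
  rw [parentMeasure_apply, tsum_univ (fun z => ENNReal.ofReal (f z)),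
    ← ENNReal.ofReal_tsum_of_nonneg hf0 hf1.summable, hf1.tsum_eq, ENNReal.ofReal_one]

lemma parentMeasure_Iic (f : ℤ → ℝ) (hf0 : ∀ z, 0 ≤ f z) (hf1 : HasSum f 1) (y : ℤ) :
    parentMeasure f {x | x ≤ y} = ENNReal.ofReal (Fcdf f y) := by
  rw [parentMeasure_apply]
  exact (ENNReal.ofReal_tsum_of_nonneg (f := fun z : {t : ℤ // t ≤ y} => f z.1)
    (fun z => hf0 z.1) (hf1.summable.subtype _)).symm

lemma Fcdf_nonneg (f : ℤ → ℝ) (hf0 : ∀ z, 0 ≤ f z) (y : ℤ) : 0 ≤ Fcdf f y :=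
  tsum_nonneg (fun z => hf0 z.1)

lemma Fcdf_le_one (f : ℤ → ℝ) (hf0 : ∀ z, 0 ≤ f z) (hf1 : HasSum f 1) (y : ℤ) :
    Fcdf f y ≤ 1 := by
  haveI := parentMeasure_prob f hf0 hf1
  have h := measure_mono (Set.subset_univ {x : ℤ | x ≤ y}) (μ := parentMeasure f)
  rw [parentMeasure_Iic f hf0 hf1, measure_univ] at h
  exact ENNReal.ofReal_le_one.mp h

lemma parentMeasure_gt (f : ℤ → ℝ) (hf0 : ∀ z, 0 ≤ f z) (hf1 : HasSum f 1) (y : ℤ) :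
    parentMeasure f {x | y < x} = ENNReal.ofReal (1 - Fcdf f y) := by
  haveI := parentMeasure_prob f hf0 hf1
  have h : {x : ℤ | y < x} = {x : ℤ | x ≤ y}ᶜ := by ext x; simp [not_le]
  rw [h, measure_compl (Set.to_countable _).measurableSet (measure_ne_top _ _),
    parentMeasure_Iic f hf0 hf1, measure_univ, ← ENNReal.ofReal_one,
    ← ENNReal.ofReal_sub _ (Fcdf_nonneg f hf0 y)]

lemma parentMeasure_singleton (f : ℤ → ℝ) (Y : ℤ) :
    parentMeasure f {Y} = ENNReal.ofReal (f Y) := by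
  rw [parentMeasure_apply]
  exact tsum_singleton Y (fun z => ENNReal.ofReal (f z))

lemma measSet {n : ℕ} (s : Set (Fin n → ℤ)) : MeasurableSet s :=
  (Set.to_countable s).measurableSet

lemma osCDF_nonneg (f : ℤ → ℝ) (hf0 : ∀ z, 0 ≤ f z) (hf1 : HasSum f 1) (a m : ℕ) (y : ℤ) :
    0 ≤ osCDF f a m y := by
  have hp := Fcdf_nonneg f hf0 y
  have hq : (0:ℝ) ≤ 1 - Fcdf f y := by linarith [Fcdf_le_one f hf0 hf1 y]
  exact Finset.sum_nonneg fun t _ => by positivity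

lemma osCDF_zero (f : ℤ → ℝ) (m : ℕ) (y : ℤ) : osCDF f 0 m y = 1 := by
  have h : osCDF f 0 m y
      = ∑ t ∈ Finset.range (m+1), Fcdf f y ^ t * (1 - Fcdf f y) ^ (m - t) * (m.choose t : ℝ) := by
    rw [osCDF, show Finset.Icc 0 m = Finset.range (m+1) from by ext a; simp]
    exact Finset.sum_congr rfl (fun t _ => by ring)
  rw [h, ← add_pow]
  simp

lemma pattern_meas (f : ℤ → ℝ) (hf0 : ∀ z, 0 ≤ f z) (hf1 : HasSum f 1)
    (m : ℕ) (y : ℤ) (S : Finset (Fin m)) :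
    Measure.pi (fun _ : Fin m => parentMeasure f)
      {z | Finset.univ.filter (fun i => z i ≤ y) = S}
      = ENNReal.ofReal (Fcdf f y) ^ S.card * ENNReal.ofReal (1 - Fcdf f y) ^ (m - S.card) := by
  haveI := parentMeasure_prob f hf0 hf1
  have hset : {z : Fin m → ℤ | Finset.univ.filter (fun i => z i ≤ y) = S}
      = Set.univ.pi (fun i => if i ∈ S then {x : ℤ | x ≤ y} else {x : ℤ | y < x}) := by
    ext z
    simp only [Set.mem_setOf_eq, Set.mem_pi, Set.mem_univ, forall_true_left, Finset.ext_iff,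
      Finset.mem_filter, Finset.mem_univ, true_and]
    constructor
    · intro h i
      by_cases hi : i ∈ S
      · simp [hi, (h i).mpr hi]
      · simp only [hi, if_false, Set.mem_setOf_eq]
        by_contra hc
        exact hi ((h i).mp (by omega))
    · intro h i
      by_cases hi : i ∈ S
      · have := h i; simp only [hi, if_true, Set.mem_setOf_eq] at this
        simp [hi, this]
      · have := h i; simp only [hi, if_false, Set.mem_setOf_eq] at this
        simp only [hi, iff_false]
        omega
  rw [hset, Measure.pi_pi]
  simp only [apply_ite (parentMeasure f)]
  rw [Finset.prod_ite (fun _ => parentMeasure f {x | x ≤ y}) (fun _ => parentMeasure f {x | y < x})]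
  rw [Finset.prod_const, Finset.prod_const, parentMeasure_Iic f hf0 hf1,
    parentMeasure_gt f hf0 hf1]
  congr 2
  · simp
  · simp [Finset.filter_not, Finset.card_sdiff_of_subset (Finset.subset_univ _)]

lemma count_eq_meas (f : ℤ → ℝ) (hf0 : ∀ z, 0 ≤ f z) (hf1 : HasSum f 1)
    (m t : ℕ) (y : ℤ) :
    Measure.pi (fun _ : Fin m => parentMeasure f) {z | countLe z y = t}
      = (m.choose t : ENNReal) * ENNReal.ofReal (Fcdf f y) ^ t
          * ENNReal.ofReal (1 - Fcdf f y) ^ (m - t) := by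
  haveI := parentMeasure_prob f hf0 hf1
  have hset : {z : Fin m → ℤ | countLe z y = t}
      = ⋃ S ∈ Finset.powersetCard t (Finset.univ : Finset (Fin m)),
          {z | Finset.univ.filter (fun i => z i ≤ y) = S} := by
    ext z
    simp [countLe, Finset.mem_powersetCard]
  rw [hset, measure_biUnion_finset ?disj (fun S _ => measSet _)]
  case disj =>
    intro S _ T _ hST
    apply Set.disjoint_left.mpr
    rintro z rfl rfl
    exact hST rfl
  have hcongr : ∀ S ∈ Finset.powersetCard t (Finset.univ : Finset (Fin m)),
      Measure.pi (fun _ : Fin m => parentMeasure f)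
        {z | Finset.univ.filter (fun i => z i ≤ y) = S}
      = ENNReal.ofReal (Fcdf f y) ^ t * ENNReal.ofReal (1 - Fcdf f y) ^ (m - t) := by
    intro S hS
    rw [pattern_meas f hf0 hf1 m y S, (Finset.mem_powersetCard.mp hS).2]
  rw [Finset.sum_congr rfl hcongr, Finset.sum_const, Finset.card_powersetCard,
    Finset.card_univ, Fintype.card_fin, nsmul_eq_mul, mul_assoc]

lemma tail_meas (f : ℤ → ℝ) (hf0 : ∀ z, 0 ≤ f z) (hf1 : HasSum f 1)
    (m k : ℕ) (y : ℤ) :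
    Measure.pi (fun _ : Fin m => parentMeasure f) {z | k ≤ countLe z y}
      = ENNReal.ofReal (osCDF f k m y) := by
  haveI := parentMeasure_prob f hf0 hf1
  have hset : {z : Fin m → ℤ | k ≤ countLe z y}
      = ⋃ t ∈ Finset.Icc k m, {z | countLe z y = t} := by
    ext z
    have hle : countLe z y ≤ m := by
      simpa [countLe] using (Finset.card_filter_le Finset.univ fun i => z i ≤ y)
    simp only [Set.mem_setOf_eq, Set.mem_iUnion, Finset.mem_Icc]
    constructor
    · intro h; exact ⟨countLe z y, ⟨h, hle⟩, rfl⟩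
    · rintro ⟨t, ⟨h1, -⟩, rfl⟩; exact h1
  rw [hset, measure_biUnion_finset ?disj (fun t _ => measSet _)]
  case disj =>
    intro s _ t _ hst
    apply Set.disjoint_left.mpr
    rintro z rfl rfl
    exact hst rfl
  have hp := Fcdf_nonneg f hf0 y
  have hq : (0:ℝ) ≤ 1 - Fcdf f y := by linarith [Fcdf_le_one f hf0 hf1 y]
  rw [osCDF, ENNReal.ofReal_sum_of_nonneg (fun t _ => by positivity)]
  refine Finset.sum_congr rfl (fun t _ => ?_)
  rw [count_eq_meas f hf0 hf1 m t y, ENNReal.ofReal_mul (by positivity),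
    ENNReal.ofReal_mul (by positivity), ENNReal.ofReal_pow hp, ENNReal.ofReal_pow hq,
    ENNReal.ofReal_natCast]

lemma piFinSuccAbove_apply_zero {n : ℕ} (z : Fin (n+1) → ℤ) :
    MeasurableEquiv.piFinSuccAbove (fun _ => ℤ) 0 z = (z 0, Fin.tail z) := by
  simp [MeasurableEquiv.piFinSuccAbove, Fin.insertNthEquiv]

lemma countLe_succ {m : ℕ} (z : Fin (m+1) → ℤ) (y : ℤ) :
    countLe z y = (if z 0 ≤ y then 1 else 0) + countLe (Fin.tail z) y := by
  simp only [countLe, Finset.card_filter, Fin.sum_univ_succ, Fin.tail]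
  simp [Finset.sum_boole]
  congr

lemma main_formula (f : ℤ → ℝ) (hf0 : ∀ z, 0 ≤ f z) (hf1 : HasSum f 1)
    (Y : ℤ) (m r : ℕ) (hr : 1 ≤ r) :
    P f (m+1) {ω | osEq r ω Y ∧ ω ⟨0, Nat.succ_pos m⟩ = Y}
      = f Y * (osCDF f (r-1) m Y - osCDF f r m (Y-1)) := by
  haveI := parentMeasure_prob f hf0 hf1
  set B : Set (Fin m → ℤ) := {z | r - 1 ≤ countLe z Y ∧ countLe z (Y-1) ≤ r - 1} with hB
  have h0 : (⟨0, Nat.succ_pos m⟩ : Fin (m+1)) = 0 := rfl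
  have hE : {ω : Fin (m+1) → ℤ | osEq r ω Y ∧ ω ⟨0, Nat.succ_pos m⟩ = Y}
      = (MeasurableEquiv.piFinSuccAbove (fun _ => ℤ) 0) ⁻¹' (({Y} : Set ℤ) ×ˢ B) := by
    ext z
    simp only [Set.mem_setOf_eq, Set.mem_preimage, piFinSuccAbove_apply_zero, Set.mem_prod,
      Set.mem_singleton_iff, osEq, h0, hB]
    have h1 := countLe_succ z Y
    have h2 := countLe_succ z (Y-1)
    constructor
    · rintro ⟨⟨ha, hb⟩, rfl⟩
      rw [if_pos (le_refl _)] at h1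
      rw [if_neg (by omega : ¬ (z 0 : ℤ) ≤ z 0 - 1)] at h2
      exact ⟨rfl, by omega, by omega⟩
    · rintro ⟨rfl, hc, hd⟩
      rw [if_pos (le_refl _)] at h1
      rw [if_neg (by omega : ¬ (z 0 : ℤ) ≤ z 0 - 1)] at h2
      exact ⟨⟨by omega, by omega⟩, rfl⟩
  have hsub2 : {z : Fin m → ℤ | r ≤ countLe z (Y-1)} ⊆ {z | r - 1 ≤ countLe z Y} := by
    intro z hz
    simp only [Set.mem_setOf_eq] at hz ⊢
    have hmono : countLe z (Y-1) ≤ countLe z Y := by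
      apply Finset.card_le_card
      intro i hi
      simp only [Finset.mem_filter, Finset.mem_univ, true_and] at hi ⊢
      omega
    omega
  have hBdiff : B = {z : Fin m → ℤ | r - 1 ≤ countLe z Y} \ {z | r ≤ countLe z (Y-1)} := by
    ext z
    simp only [hB, Set.mem_setOf_eq, Set.mem_diff]
    omega
  have hQle : osCDF f r m (Y-1) ≤ osCDF f (r-1) m Y := by
    have := measure_mono hsub2 (μ := Measure.pi (fun _ : Fin m => parentMeasure f))
    rw [tail_meas f hf0 hf1 m r (Y-1), tail_meas f hf0 hf1 m (r-1) Y] at this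
    exact (ENNReal.ofReal_le_ofReal_iff (osCDF_nonneg f hf0 hf1 _ _ _)).mp this
  rw [P, hE,
    (measurePreserving_piFinSuccAbove (fun _ : Fin (m+1) => parentMeasure f) 0).measure_preimage
      ((Set.to_countable _).measurableSet.nullMeasurableSet),
    Measure.prod_prod, parentMeasure_singleton, hBdiff,
    measure_diff hsub2 (measSet _).nullMeasurableSet (measure_ne_top _ _),
    tail_meas f hf0 hf1 m r (Y-1), tail_meas f hf0 hf1 m (r-1) Y,
    ← ENNReal.ofReal_sub _ (osCDF_nonneg f hf0 hf1 r m (Y-1)),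
    ← ENNReal.ofReal_mul (hf0 Y),
    ENNReal.toReal_ofReal (mul_nonneg (hf0 Y) (by linarith))]

/-- **Lemma C.6** (conditional probability given one tie): for `Y` with `f(Y) > 0` and
`D ≥ 2`:
(i) for `1 < r < D`, `P(os_r(Z) = Y ∧ Z_1 = Y) = f(Y)·(F^{(r−1,D−1)}(Y) − F^{(r,D−1)}(Y−1))`;
(ii) for `r = D`, `P(os_D(Z) = Y ∧ Z_1 = Y) = f(Y)·F^{(D−1,D−1)}(Y)`;
(iii) for `r = 1`, `P(os_1(Z) = Y ∧ Z_1 = Y) = f(Y)·(1 − F^{(1,D−1)}(Y−1))`.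
Dividing by `P(Z_1 = Y) = f(Y) > 0` gives the corresponding conditional probabilities. -/
theorem conditional_probability_one_tie
    (f : ℤ → ℝ) (hf0 : ∀ z, 0 ≤ f z) (hf1 : HasSum f 1)
    (Y : ℤ) (hfY : 0 < f Y) (D : ℕ) (hD : 2 ≤ D) (r : ℕ) (hr1 : 1 ≤ r) (hrD : r ≤ D) :
    ((1 < r ∧ r < D) →
      P f D {ω | osEq r ω Y ∧ ω ⟨0, by omega⟩ = Y}
        = f Y * (osCDF f (r - 1) (D - 1) Y - osCDF f r (D - 1) (Y - 1))) ∧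
    (r = D →
      P f D {ω | osEq D ω Y ∧ ω ⟨0, by omega⟩ = Y}
        = f Y * osCDF f (D - 1) (D - 1) Y) ∧
    (r = 1 →
      P f D {ω | osEq 1 ω Y ∧ ω ⟨0, by omega⟩ = Y}
        = f Y * (1 - osCDF f 1 (D - 1) (Y - 1))) := by
  obtain ⟨m, rfl⟩ : ∃ m, D = m + 1 := ⟨D - 1, by omega⟩
  simp only [Nat.add_sub_cancel]
  refine ⟨fun _ => ?_, fun hrD' => ?_, fun _ => ?_⟩
  · exact main_formula f hf0 hf1 Y m r hr1
  · have h := main_formula f hf0 hf1 Y m (m+1) (by omega)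
    rw [Nat.add_sub_cancel, show osCDF f (m+1) m (Y-1) = 0 from by
      rw [osCDF, Finset.Icc_eq_empty (by omega), Finset.sum_empty], sub_zero] at h
    exact h
  · have h := main_formula f hf0 hf1 Y m 1 (le_refl 1)
    rw [show (1:ℕ) - 1 = 0 from rfl, osCDF_zero] at h
    exact h
end
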